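/- For any nonnegative matrix A ∈ ℝ^{m×n} with s = ∑_{ij} A_{ij}, the capacity satisfies cap(A) ≥ s − mn·√(Δ(A)/2). -/

import Mathlib

set_option maxHeartbeats 1000000

open Matrix BigOperators

/-- Capacity of a nonnegative matrix. -/
noncomputable def matCap {ι κ : Type*} [Fintype ι] [Fintype κ] (A : Matrix ι κ ℝ) : ℝ :=
  sInf {c : ℝ | ∃ x : κ → ℝ, (∀ j, 0 < x j) ∧
    c = (Fintype.card ι : ℝ) * (∏ i, A.mulVec x i) ^ ((1 : ℝ) / (Fintype.card ι : ℝ)) /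
        (∏ j, x j) ^ ((1 : ℝ) / (Fintype.card κ : ℝ))}

/-- Size of a matrix: the sum of all entries. -/
noncomputable def matSize {ι κ : Type*} [Fintype ι] [Fintype κ] (A : Matrix ι κ ℝ) : ℝ :=
  ∑ i, ∑ j, A i j

/-- The measure Δ of distance to doubly balanced. -/
noncomputable def matDelta {ι κ : Type*} [Fintype ι] [Fintype κ] (A : Matrix ι κ ℝ) : ℝ :=
  (1 / (Fintype.card ι : ℝ)) * ∑ i, (matSize A - (Fintype.card ι : ℝ) * ∑ j, A i j) ^ 2 +
  (1 / (Fintype.card κ : ℝ)) * ∑ j, (matSize A - (Fintype.card κ : ℝ) * ∑ i, A i j) ^ 2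

namespace MatCapAux

open Finset MeasureTheory Set

lemma abs_sum_subset_le {ι : Type*} [Fintype ι] [DecidableEq ι] (d : ι → ℝ)
    (hd : ∑ i, d i = 0) (S : Finset ι) :
    |∑ i ∈ S, d i| ≤ (1/2) * Real.sqrt ((Fintype.card ι) * ∑ i, (d i)^2) := by
  classical
  set c : ℝ := (Fintype.card ι : ℝ) with hc
  set k : ℝ := (S.card : ℝ) with hk
  rcases Nat.eq_zero_or_pos (Fintype.card ι) with h0 | h0
  · have : IsEmpty ι := Fintype.card_eq_zero_iff.mp h0
    have hS : S = ∅ := Finset.eq_empty_of_isEmpty S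
    rw [hS]
    simp only [Finset.sum_empty, abs_zero]
    positivity
  have hc0 : (0:ℝ) < c := by rw [hc]; exact_mod_cast h0
  set g : ι → ℝ := fun i => if i ∈ S then c - k else -k with hg
  have hsum : ∑ i, d i * g i = c * ∑ i ∈ S, d i := by
    have : ∀ i, d i * g i = (if i ∈ S then c * d i else 0) - k * d i := by
      intro i; by_cases h : i ∈ S <;> simp [hg, h] <;> ring
    rw [Finset.sum_congr rfl fun i _ => this i, Finset.sum_sub_distrib, ← Finset.mul_sum, hd,
      Finset.sum_ite_mem, Finset.univ_inter, ← Finset.mul_sum]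
    ring
  have hg2 : ∑ i, g i ^ 2 = k * (c - k) * c := by
    have h1 : ∀ i ∈ S, g i ^ 2 = (c - k)^2 := by intro i hi; simp [hg, hi]
    have h2 : ∀ i ∈ Sᶜ, g i ^ 2 = k^2 := by
      intro i hi; simp only [Finset.mem_compl] at hi; simp [hg, hi]
    rw [← Finset.sum_add_sum_compl S (fun i => g i ^ 2), Finset.sum_congr rfl h1,
      Finset.sum_congr rfl h2, Finset.sum_const, Finset.sum_const, Finset.card_compl,
      nsmul_eq_mul, nsmul_eq_mul]
    have hkle : S.card ≤ Fintype.card ι := Finset.card_le_univ S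
    have : ((Fintype.card ι - S.card : ℕ) : ℝ) = c - k := by
      rw [Nat.cast_sub hkle]
    rw [this, ← hk]
    ring
  have hCS := Finset.sum_mul_sq_le_sq_mul_sq Finset.univ d g
  rw [hsum, hg2] at hCS
  have hkk : k * (c - k) ≤ c^2/4 := by nlinarith [sq_nonneg (c - 2*k)]
  have hd2 : 0 ≤ ∑ i, d i ^ 2 := Finset.sum_nonneg fun i _ => sq_nonneg _
  have key : (∑ i ∈ S, d i)^2 ≤ c * (∑ i, d i ^ 2) / 4 := by
    have h2 : c^2 * (∑ i ∈ S, d i)^2 ≤ c^2 * (c * (∑ i, d i ^ 2) / 4) := by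
      nlinarith [hCS, mul_le_mul_of_nonneg_right (mul_le_mul_of_nonneg_left hkk hd2) hc0.le]
    exact le_of_mul_le_mul_left h2 (by positivity)
  have hhalf : Real.sqrt (c * (∑ i, (d i)^2) / 4) = (1/2) * Real.sqrt (c * ∑ i, (d i)^2) := by
    rw [show c * (∑ i, (d i)^2) / 4 = (1/2)^2 * (c * ∑ i, (d i)^2) by ring,
      Real.sqrt_mul (by positivity : (0:ℝ) ≤ (1/2)^2) (c * ∑ i, (d i)^2),
      Real.sqrt_sq (by norm_num : (0:ℝ) ≤ 1/2)]
  rw [← hhalf]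
  exact Real.abs_le_sqrt key

lemma sqrt_avg (a b : ℝ) (ha : 0 ≤ a) (hb : 0 ≤ b) :
    Real.sqrt a + Real.sqrt b ≤ 2 * Real.sqrt ((a+b)/2) := by
  have h1 : (Real.sqrt a + Real.sqrt b)^2 ≤ 2*(a+b) := by
    nlinarith [Real.sq_sqrt ha, Real.sq_sqrt hb, sq_nonneg (Real.sqrt a - Real.sqrt b)]
  have h2 : Real.sqrt a + Real.sqrt b = Real.sqrt ((Real.sqrt a + Real.sqrt b)^2) := by
    rw [Real.sqrt_sq (by positivity)]
  rw [h2]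
  have h3 : 2 * Real.sqrt ((a+b)/2) = Real.sqrt (2*(a+b)) := by
    rw [show 2*(a+b) = 2^2 * ((a+b)/2) by ring, Real.sqrt_mul (by positivity),
      Real.sqrt_sq (by norm_num)]
  rw [h3]
  exact Real.sqrt_le_sqrt h1

lemma intInd {s : Set ℝ} (hs : MeasurableSet s) (a b : ℝ) :
    IntervalIntegrable (s.indicator fun _ => (1:ℝ)) volume a b := by
  rw [intervalIntegrable_iff]
  exact (integrableOn_const measure_Ioc_lt_top.ne).indicator hs

lemma intgInd {s : Set ℝ} (hs : MeasurableSet s) {a b : ℝ} (hab : a ≤ b) :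
    ∫ l in a..b, s.indicator (fun _ => (1:ℝ)) l = (volume (s ∩ Set.Ioc a b)).toReal := by
  rw [intervalIntegral.integral_of_le hab, MeasureTheory.integral_indicator hs,
    MeasureTheory.setIntegral_const, measureReal_def, MeasureTheory.Measure.restrict_apply hs]
  simp

lemma volA {M u : ℝ} (h1 : -M ≤ u) (h2 : u ≤ M) :
    (volume (Set.Iio u ∩ Set.Ioc (-M) M)).toReal = u + M := by
  have : Set.Iio u ∩ Set.Ioc (-M) M = Set.Ioo (-M) u := by
    ext x
    simp only [Set.mem_inter_iff, Set.mem_Iio, Set.mem_Ioc, Set.mem_Ioo]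
    constructor
    · rintro ⟨h, h', _⟩; exact ⟨h', h⟩
    · rintro ⟨h, h'⟩; exact ⟨h', h, by linarith⟩
  rw [this, Real.volume_Ioo, ENNReal.toReal_ofReal (by linarith)]
  ring

lemma volB {M v : ℝ} (h1 : -M < -v) (h2 : -v ≤ M) :
    (volume (Set.Ici (-v) ∩ Set.Ioc (-M) M)).toReal = M + v := by
  have : Set.Ici (-v) ∩ Set.Ioc (-M) M = Set.Icc (-v) M := by
    ext x
    simp only [Set.mem_inter_iff, Set.mem_Ici, Set.mem_Ioc, Set.mem_Icc]
    constructor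
    · rintro ⟨h, _, h'⟩; exact ⟨h, h'⟩
    · rintro ⟨h, h'⟩; exact ⟨h, by linarith, h'⟩
  rw [this, Real.volume_Icc, ENNReal.toReal_ofReal (by linarith)]
  ring

lemma volC {M u v : ℝ} (h1 : -M < -v) (h2 : u ≤ M) :
    (volume (Set.Ico (-v) u ∩ Set.Ioc (-M) M)).toReal = max (u + v) 0 := by
  have : Set.Ico (-v) u ∩ Set.Ioc (-M) M = Set.Ico (-v) u := by
    apply Set.inter_eq_left.2
    intro x hx
    simp only [Set.mem_Ico] at hx
    exact ⟨by linarith [hx.1], by linarith [hx.2]⟩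
  rw [this, Real.volume_Ico]
  rcases le_total 0 (u + v) with h | h
  · rw [ENNReal.toReal_ofReal (by linarith)]
    rw [max_eq_left h]; ring
  · rw [ENNReal.ofReal_of_nonpos (by linarith)]
    simp [max_eq_right h]

lemma layer_cake {m n : ℕ} (hm : 0 < m) (hn : 0 < n) (A : Fin m → Fin n → ℝ)
    {t : ℝ}
    (hcut : ∀ (S : Finset (Fin m)) (T : Finset (Fin n)),
      t * ((S.card : ℝ) / m + (T.card : ℝ) / n - 1) ≤ ∑ i ∈ S, ∑ j ∈ T, A i j)
    (u : Fin m → ℝ) (v : Fin n → ℝ) :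
    t/m * ∑ i, u i + t/n * ∑ j, v j ≤ ∑ i, ∑ j, A i j * max (u i + v j) 0 := by
  classical
  set M : ℝ := (∑ i, |u i|) + (∑ j, |v j|) + 1 with hM
  have habsu : ∀ i, |u i| < M := by
    intro i
    have h1 : |u i| ≤ ∑ i, |u i| :=
      Finset.single_le_sum (fun i _ => abs_nonneg (u i)) (Finset.mem_univ i)
    have h2 : 0 ≤ ∑ j, |v j| := Finset.sum_nonneg fun j _ => abs_nonneg _
    rw [hM]; linarith
  have habsv : ∀ j, |v j| < M := by
    intro j
    have h1 : |v j| ≤ ∑ j, |v j| :=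
      Finset.single_le_sum (fun j _ => abs_nonneg (v j)) (Finset.mem_univ j)
    have h2 : 0 ≤ ∑ i, |u i| := Finset.sum_nonneg fun i _ => abs_nonneg _
    rw [hM]; linarith
  have hu1 : ∀ i, -M ≤ u i := fun i => by have := (abs_lt.1 (habsu i)).1; linarith
  have hu2 : ∀ i, u i ≤ M := fun i => le_of_lt (abs_lt.1 (habsu i)).2
  have hv1 : ∀ j, -M < -(v j) := fun j => by have := (abs_lt.1 (habsv j)).2; linarith
  have hv2 : ∀ j, -(v j) ≤ M := fun j => by have := (abs_lt.1 (habsv j)).1; linarith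
  have hMM : -M ≤ M := by
    have h2 : 0 ≤ ∑ j, |v j| := Finset.sum_nonneg fun j _ => abs_nonneg _
    have h1 : 0 ≤ ∑ i, |u i| := Finset.sum_nonneg fun i _ => abs_nonneg _
    rw [hM]; linarith
  -- the two sides as functions of the level
  set F : ℝ → ℝ := fun l => t * ((∑ i, (Set.Iio (u i)).indicator (fun _ => (1:ℝ)) l) / m
      + (∑ j, (Set.Ici (-(v j))).indicator (fun _ => (1:ℝ)) l) / n - 1) with hF
  set G : ℝ → ℝ := fun l => ∑ i, ∑ j, A i j * (Set.Ico (-(v j)) (u i)).indicator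
      (fun _ => (1:ℝ)) l with hG
  -- pointwise inequality
  have hpt : ∀ l, F l ≤ G l := by
    intro l
    have e1 : (∑ i, (Set.Iio (u i)).indicator (fun _ => (1:ℝ)) l)
        = ((Finset.univ.filter fun i => l < u i).card : ℝ) := by
      simp only [Set.indicator_apply, Set.mem_Iio]
      rw [Finset.sum_boole]
    have e2 : (∑ j, (Set.Ici (-(v j))).indicator (fun _ => (1:ℝ)) l)
        = ((Finset.univ.filter fun j => -(v j) ≤ l).card : ℝ) := by
      simp only [Set.indicator_apply, Set.mem_Ici]
      rw [Finset.sum_boole]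
    have h1 : ∀ i j, A i j * (Set.Ico (-(v j)) (u i)).indicator (fun _ => (1:ℝ)) l
        = (if l < u i then (if -(v j) ≤ l then A i j else 0) else 0) := by
      intro i j
      rw [Set.indicator_apply]
      by_cases hx : l < u i <;> by_cases hy : -(v j) ≤ l <;>
        simp [Set.mem_Ico, hx, hy]
    have e3 : G l = ∑ i ∈ Finset.univ.filter (fun i => l < u i),
        ∑ j ∈ Finset.univ.filter (fun j => -(v j) ≤ l), A i j := by
      calc G l = ∑ i, ∑ j, (if l < u i then (if -(v j) ≤ l then A i j else 0) else 0) :=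
            Finset.sum_congr rfl fun i _ => Finset.sum_congr rfl fun j _ => h1 i j
        _ = ∑ i, (if l < u i then ∑ j, (if -(v j) ≤ l then A i j else 0) else 0) := by
            apply Finset.sum_congr rfl; intro i _; split_ifs with h <;> simp
        _ = ∑ i ∈ Finset.univ.filter (fun i => l < u i),
              ∑ j, (if -(v j) ≤ l then A i j else 0) := (Finset.sum_filter _ _).symm
        _ = _ := Finset.sum_congr rfl fun i _ => (Finset.sum_filter _ _).symm
    rw [hF, e3]
    simp only [e1, e2]
    exact hcut _ _
  -- integrability
  have hS1 : IntervalIntegrable (fun l => ∑ i, (Set.Iio (u i)).indicator (fun _ => (1:ℝ)) l)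
      volume (-M) M := by
    have := IntervalIntegrable.sum (μ := volume) (a := -M) (b := M) Finset.univ
      (f := fun i : Fin m => (Set.Iio (u i)).indicator (fun _ => (1:ℝ)))
      (fun i _ => intInd measurableSet_Iio _ _)
    convert this using 1
    · rfl
    ext l; simp
  have hS2 : IntervalIntegrable (fun l => ∑ j, (Set.Ici (-(v j))).indicator (fun _ => (1:ℝ)) l)
      volume (-M) M := by
    have := IntervalIntegrable.sum (μ := volume) (a := -M) (b := M) Finset.univ
      (f := fun j : Fin n => (Set.Ici (-(v j))).indicator (fun _ => (1:ℝ)))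
      (fun j _ => intInd measurableSet_Ici _ _)
    convert this using 1
    · rfl
    ext l; simp
  have hFi : IntervalIntegrable F volume (-M) M := by
    apply IntervalIntegrable.const_mul
    exact ((hS1.div_const _).add (hS2.div_const _)).sub intervalIntegrable_const
  have hGin : ∀ (i : Fin m), IntervalIntegrable
      (fun l => ∑ j, A i j * (Set.Ico (-(v j)) (u i)).indicator (fun _ => (1:ℝ)) l)
      volume (-M) M := by
    intro i
    have := IntervalIntegrable.sum (μ := volume) (a := -M) (b := M) Finset.univ
      (f := fun j : Fin n => fun l => A i j * (Set.Ico (-(v j)) (u i)).indicator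
        (fun _ => (1:ℝ)) l)
      (fun j _ => (intInd measurableSet_Ico _ _).const_mul _)
    convert this using 1
    · rfl
    ext l; simp
  have hGi : IntervalIntegrable G volume (-M) M := by
    have := IntervalIntegrable.sum (μ := volume) (a := -M) (b := M) Finset.univ
      (f := fun i : Fin m => fun l => ∑ j, A i j * (Set.Ico (-(v j)) (u i)).indicator
        (fun _ => (1:ℝ)) l)
      (fun i _ => hGin i)
    convert this using 1
    · rfl
    ext l; simp [hG]
  -- integrals
  have hIS1 : ∫ l in (-M)..M, (∑ i, (Set.Iio (u i)).indicator (fun _ => (1:ℝ)) l)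
      = ∑ i, (u i + M) := by
    rw [intervalIntegral.integral_finset_sum (fun i _ => intInd measurableSet_Iio _ _)]
    exact Finset.sum_congr rfl fun i _ => by
      rw [intgInd measurableSet_Iio hMM, volA (hu1 i) (hu2 i)]
  have hIS2 : ∫ l in (-M)..M, (∑ j, (Set.Ici (-(v j))).indicator (fun _ => (1:ℝ)) l)
      = ∑ j, (M + v j) := by
    rw [intervalIntegral.integral_finset_sum (fun j _ => intInd measurableSet_Ici _ _)]
    exact Finset.sum_congr rfl fun j _ => by
      rw [intgInd measurableSet_Ici hMM, volB (hv1 j) (hv2 j)]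
  have hIG : ∫ l in (-M)..M, G l = ∑ i, ∑ j, A i j * max (u i + v j) 0 := by
    rw [hG, intervalIntegral.integral_finset_sum (fun i _ => hGin i)]
    refine Finset.sum_congr rfl fun i _ => ?_
    rw [intervalIntegral.integral_finset_sum
      (fun j _ => (intInd measurableSet_Ico _ _).const_mul _)]
    refine Finset.sum_congr rfl fun j _ => ?_
    rw [intervalIntegral.integral_const_mul, intgInd measurableSet_Ico hMM,
      volC (hv1 j) (hu2 i)]
  have hIF : ∫ l in (-M)..M, F l
      = t * ((∑ i, (u i + M)) / m + (∑ j, (M + v j)) / n - 2 * M) := by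
    rw [hF, intervalIntegral.integral_const_mul,
      intervalIntegral.integral_sub
        ((hS1.div_const _).add (hS2.div_const _)) intervalIntegrable_const,
      intervalIntegral.integral_add (hS1.div_const _) (hS2.div_const _),
      intervalIntegral.integral_div, intervalIntegral.integral_div,
      hIS1, hIS2, intervalIntegral.integral_const]
    simp only [smul_eq_mul, mul_one]
    ring
  have hmono := intervalIntegral.integral_mono_on hMM hFi hGi (fun l _ => hpt l)
  rw [hIF, hIG] at hmono
  have hsum1 : (∑ i, (u i + M)) = (∑ i, u i) + m * M := by
    rw [Finset.sum_add_distrib, Finset.sum_const, Finset.card_univ, Fintype.card_fin,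
      nsmul_eq_mul]
  have hsum2 : (∑ j, (M + v j)) = n * M + ∑ j, v j := by
    rw [Finset.sum_add_distrib, Finset.sum_const, Finset.card_univ, Fintype.card_fin,
      nsmul_eq_mul]
  rw [hsum1, hsum2] at hmono
  have hm0 : (m:ℝ) ≠ 0 := Nat.cast_ne_zero.2 hm.ne'
  have hn0 : (n:ℝ) ≠ 0 := Nat.cast_ne_zero.2 hn.ne'
  have : t * (((∑ i, u i) + m*M) / m + (n*M + ∑ j, v j) / n - 2*M)
      = t/m * ∑ i, u i + t/n * ∑ j, v j := by
    field_simp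
    ring
  linarith [hmono, this.symm.le, this.le]

lemma exists_balanced {m n : ℕ} (hm : 0 < m) (hn : 0 < n) (A : Fin m → Fin n → ℝ)
    (hA : ∀ i j, 0 ≤ A i j) {t : ℝ}
    (hcut : ∀ (S : Finset (Fin m)) (T : Finset (Fin n)),
      t * ((S.card : ℝ) / m + (T.card : ℝ) / n - 1) ≤ ∑ i ∈ S, ∑ j ∈ T, A i j) :
    ∃ B : Fin m → Fin n → ℝ, (∀ i j, 0 ≤ B i j ∧ B i j ≤ A i j) ∧
      (∀ i, ∑ j, B i j = t / m) ∧ (∀ j, ∑ i, B i j = t / n) := by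
  classical
  let μ : (Fin m → Fin n → ℝ) →ₗ[ℝ] (Fin m → ℝ) × (Fin n → ℝ) :=
    { toFun := fun B => (fun i => ∑ j, B i j, fun j => ∑ i, B i j)
      map_add' := fun B C => by
        ext x <;> simp [Finset.sum_add_distrib]
      map_smul' := fun c B => by
        ext x <;> simp [Finset.mul_sum] }
  let K : Set (Fin m → Fin n → ℝ) := Set.univ.pi fun i => Set.univ.pi fun j => Set.Icc 0 (A i j)
  have hKmem : ∀ B, B ∈ K ↔ ∀ i j, 0 ≤ B i j ∧ B i j ≤ A i j := by
    intro B
    simp only [K, Set.mem_univ_pi, Set.mem_Icc]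
  have hKcomp : IsCompact K :=
    isCompact_univ_pi fun i => isCompact_univ_pi fun j => isCompact_Icc
  have hKconv : Convex ℝ K :=
    convex_pi fun i _ => convex_pi fun j _ => convex_Icc _ _
  have hμcont : Continuous μ := μ.continuous_of_finiteDimensional
  set p : (Fin m → ℝ) × (Fin n → ℝ) := (fun _ => t / m, fun _ => t / n) with hp
  by_contra hcon
  have hpnot : p ∉ μ '' K := by
    rintro ⟨B, hBK, hμB⟩
    refine hcon ⟨B, (hKmem B).1 hBK, ?_, ?_⟩
    · intro i
      have := congrArg (fun q => q.1 i) hμB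
      simpa [μ, p] using this
    · intro j
      have := congrArg (fun q => q.2 j) hμB
      simpa [μ, p] using this
  obtain ⟨f, c, hfK, hfp⟩ := geometric_hahn_banach_closed_point
    (hKconv.linear_image μ) (hKcomp.image hμcont).isClosed hpnot
  set u : Fin m → ℝ := fun i => f ((Pi.single i 1 : Fin m → ℝ), (0 : Fin n → ℝ)) with hu
  set v : Fin n → ℝ := fun j => f ((0 : Fin m → ℝ), (Pi.single j 1 : Fin n → ℝ)) with hv
  have hfeval : ∀ (a : Fin m → ℝ) (b : Fin n → ℝ),
      f (a, b) = ∑ i, a i * u i + ∑ j, b j * v j := by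
    intro a b
    have hab : (a, b) = (∑ i, a i • (((Pi.single i (1:ℝ) : Fin m → ℝ), (0 : Fin n → ℝ)) : (Fin m → ℝ) × (Fin n → ℝ)))
        + ∑ j, b j • ((((0 : Fin m → ℝ), (Pi.single j (1:ℝ) : Fin n → ℝ)) : (Fin m → ℝ) × (Fin n → ℝ))) := by
      apply Prod.ext
      · simp only [Prod.fst_add, Prod.fst_sum, Prod.smul_fst, smul_zero]
        ext k
        simp [Finset.sum_apply, Pi.single_apply, mul_ite]
      · simp only [Prod.snd_add, Prod.snd_sum, Prod.smul_snd, smul_zero]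
        ext k
        simp [Finset.sum_apply, Pi.single_apply, mul_ite]
    rw [hab, map_add, map_sum, map_sum]
    simp only [_root_.map_smul, smul_eq_mul]
    rfl
  -- the extremizing element of K
  set Bh : Fin m → Fin n → ℝ := fun i j => if 0 ≤ u i + v j then A i j else 0 with hBh
  have hBhK : Bh ∈ K := by
    rw [hKmem]
    intro i j
    by_cases h : 0 ≤ u i + v j <;> simp [hBh, h, hA i j, le_refl]
  have h1 : f (μ Bh) = ∑ i, ∑ j, A i j * max (u i + v j) 0 := by
    have : f (μ Bh) = ∑ i, (∑ j, Bh i j) * u i + ∑ j, (∑ i, Bh i j) * v j := hfeval _ _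
    rw [this]
    have e1 : ∑ i, (∑ j, Bh i j) * u i = ∑ i, ∑ j, Bh i j * u i := by
      exact Finset.sum_congr rfl fun i _ => Finset.sum_mul ..
    have e2 : ∑ j, (∑ i, Bh i j) * v j = ∑ i, ∑ j, Bh i j * v j := by
      rw [Finset.sum_comm]
      exact Finset.sum_congr rfl fun j _ => Finset.sum_mul ..
    rw [e1, e2, ← Finset.sum_add_distrib]
    refine Finset.sum_congr rfl fun i _ => ?_
    rw [← Finset.sum_add_distrib]
    refine Finset.sum_congr rfl fun j _ => ?_
    by_cases h : 0 ≤ u i + v j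
    · rw [max_eq_left h]
      simp only [hBh, if_pos h]
      ring
    · rw [max_eq_right (le_of_not_ge h)]
      simp only [hBh, if_neg h]
      ring
  have h2 : f p = t/m * ∑ i, u i + t/n * ∑ j, v j := by
    rw [hp, hfeval]
    rw [← Finset.mul_sum, ← Finset.mul_sum]
  have hkey := layer_cake hm hn A hcut u v
  have hlt : f (μ Bh) < c := hfK _ ⟨Bh, hBhK, rfl⟩
  rw [h1] at hlt
  rw [h2] at hfp
  linarith

lemma cut_bound {m n : ℕ} (hm : 0 < m) (hn : 0 < n) (A : Matrix (Fin m) (Fin n) ℝ)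
    (hA : ∀ i j, 0 ≤ A i j)
    (ht0 : 0 ≤ matSize A - (m:ℝ) * (n:ℝ) * Real.sqrt (matDelta A / 2))
    (S : Finset (Fin m)) (T : Finset (Fin n)) :
    (matSize A - (m:ℝ) * (n:ℝ) * Real.sqrt (matDelta A / 2))
        * ((S.card : ℝ)/m + (T.card : ℝ)/n - 1)
      ≤ ∑ i ∈ S, ∑ j ∈ T, A i j := by
  classical
  have hm' : (0:ℝ) < m := Nat.cast_pos.2 hm
  have hn' : (0:ℝ) < n := Nat.cast_pos.2 hn
  set s : ℝ := matSize A with hs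
  set r : Fin m → ℝ := fun i => ∑ j, A i j with hr
  set cl : Fin n → ℝ := fun j => ∑ i, A i j with hcl
  have hsr : ∑ i, r i = s := by rw [hs, matSize]
  have hsc : ∑ j, cl j = s := by rw [hs, matSize]; exact Finset.sum_comm
  set d : Fin m → ℝ := fun i => r i - s/m with hdd
  set e : Fin n → ℝ := fun j => cl j - s/n with hee
  have hd : ∑ i, d i = 0 := by
    rw [hdd]
    rw [Finset.sum_sub_distrib, hsr, Finset.sum_const, Finset.card_univ, Fintype.card_fin,
      nsmul_eq_mul]
    field_simp
    ring
  have he : ∑ j, e j = 0 := by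
    rw [hee]
    rw [Finset.sum_sub_distrib, hsc, Finset.sum_const, Finset.card_univ, Fintype.card_fin,
      nsmul_eq_mul]
    field_simp
    ring
  -- identify matDelta
  have hD1 : (1 / (m:ℝ)) * ∑ i, (s - m * r i)^2 = m * ∑ i, (d i)^2 := by
    have h1 : ∀ i, (s - m * r i)^2 = m^2 * (d i)^2 := by
      intro i
      rw [hdd]
      field_simp
      try ring
    rw [Finset.sum_congr rfl fun i _ => h1 i, ← Finset.mul_sum]
    field_simp
    try ring
  have hD2 : (1 / (n:ℝ)) * ∑ j, (s - n * cl j)^2 = n * ∑ j, (e j)^2 := by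
    have h1 : ∀ j, (s - n * cl j)^2 = n^2 * (e j)^2 := by
      intro j
      rw [hee]
      field_simp
      try ring
    rw [Finset.sum_congr rfl fun j _ => h1 j, ← Finset.mul_sum]
    field_simp
    try ring
  have hDelta : matDelta A = m * (∑ i, (d i)^2) + n * (∑ j, (e j)^2) := by
    rw [matDelta, ← hD1, ← hD2]
    simp only [Fintype.card_fin]
    try rfl
  -- Cauchy-Schwarz bounds
  have hcs1 : |∑ i ∈ S, d i| ≤ (1/2) * Real.sqrt (m * ∑ i, (d i)^2) := by
    simpa [Fintype.card_fin] using abs_sum_subset_le d hd S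
  have hcs2 : |∑ j ∈ Tᶜ, e j| ≤ (1/2) * Real.sqrt (n * ∑ j, (e j)^2) := by
    simpa [Fintype.card_fin] using abs_sum_subset_le e he Tᶜ
  have hsq : (1/2) * Real.sqrt (m * ∑ i, (d i)^2) + (1/2) * Real.sqrt (n * ∑ j, (e j)^2)
      ≤ Real.sqrt (matDelta A / 2) := by
    have h1 := sqrt_avg (m * ∑ i, (d i)^2) (n * ∑ j, (e j)^2)
      (by positivity) (by positivity)
    rw [hDelta]
    linarith
  -- lower bound for the box sum
  have h1 : ∑ i ∈ S, r i = (∑ i ∈ S, ∑ j ∈ T, A i j) + ∑ i ∈ S, ∑ j ∈ Tᶜ, A i j := by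
    rw [← Finset.sum_add_distrib]
    exact Finset.sum_congr rfl fun i _ => (Finset.sum_add_sum_compl T _).symm
  have h2 : ∑ i ∈ S, ∑ j ∈ Tᶜ, A i j ≤ ∑ j ∈ Tᶜ, cl j := by
    calc ∑ i ∈ S, ∑ j ∈ Tᶜ, A i j ≤ ∑ i, ∑ j ∈ Tᶜ, A i j :=
          Finset.sum_le_sum_of_subset_of_nonneg (Finset.subset_univ S)
            (fun i _ _ => Finset.sum_nonneg fun j _ => hA i j)
      _ = ∑ j ∈ Tᶜ, cl j := Finset.sum_comm
  have h3 : ∑ i ∈ S, r i = (S.card : ℝ) * (s/m) + ∑ i ∈ S, d i := by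
    have : ∀ i, r i = s/m + d i := fun i => by rw [hdd]; ring
    rw [Finset.sum_congr rfl fun i _ => this i, Finset.sum_add_distrib, Finset.sum_const,
      nsmul_eq_mul]
  have h4 : ∑ j ∈ Tᶜ, cl j = ((Tᶜ.card : ℝ)) * (s/n) + ∑ j ∈ Tᶜ, e j := by
    have : ∀ j, cl j = s/n + e j := fun j => by rw [hee]; ring
    rw [Finset.sum_congr rfl fun j _ => this j, Finset.sum_add_distrib, Finset.sum_const,
      nsmul_eq_mul]
  have hTc : (Tᶜ.card : ℝ) = n - T.card := by
    rw [Finset.card_compl, Nat.cast_sub (Finset.card_le_univ T)]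
    try simp
  set κ : ℝ := (S.card : ℝ)/m + (T.card : ℝ)/n - 1 with hκ
  have hbox : s * κ - Real.sqrt (matDelta A / 2) ≤ ∑ i ∈ S, ∑ j ∈ T, A i j := by
    have e5 : (S.card : ℝ) * (s/m) - (Tᶜ.card : ℝ) * (s/n) = s * κ := by
      rw [hTc, hκ]
      field_simp
      ring
    have l1 : -(1/2 * Real.sqrt (m * ∑ i, (d i)^2)) ≤ ∑ i ∈ S, d i :=
      neg_le_of_abs_le hcs1
    have l2 : ∑ j ∈ Tᶜ, e j ≤ 1/2 * Real.sqrt (n * ∑ j, (e j)^2) :=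
      le_of_abs_le hcs2
    have hA' : ∑ i ∈ S, r i - ∑ j ∈ Tᶜ, cl j ≤ ∑ i ∈ S, ∑ j ∈ T, A i j := by
      linarith [h1, h2]
    rw [h3, h4] at hA'
    linarith [hsq]
  rcases le_or_gt κ 0 with hκ0 | hκ0
  · have hts : (s - (m:ℝ)*(n:ℝ)*Real.sqrt (matDelta A / 2)) * κ ≤ 0 :=
      mul_nonpos_iff.2 (Or.inl ⟨ht0, hκ0⟩)
    have : (0:ℝ) ≤ ∑ i ∈ S, ∑ j ∈ T, A i j :=
      Finset.sum_nonneg fun i _ => Finset.sum_nonneg fun j _ => hA i j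
    linarith
  · have heq : κ * ((m:ℝ)*n) = (S.card:ℝ)*n + (T.card:ℝ)*m - (m:ℝ)*n := by
      rw [hκ]; field_simp; try ring
    have hpos : (0:ℝ) < (S.card:ℝ)*n + (T.card:ℝ)*m - (m:ℝ)*n := by
      rw [← heq]; exact mul_pos hκ0 (mul_pos hm' hn')
    have hz : (1:ℤ) ≤ (S.card:ℤ)*n + (T.card:ℤ)*m - (m:ℤ)*n := by
      have : (0:ℤ) < (S.card:ℤ)*n + (T.card:ℤ)*m - (m:ℤ)*n := by exact_mod_cast hpos
      omega
    have hmnκ : 1 ≤ κ * ((m:ℝ)*n) := by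
      have h9 : (1:ℝ) ≤ (S.card:ℝ)*n + (T.card:ℝ)*m - (m:ℝ)*n := by exact_mod_cast hz
      linarith [heq]
    have hrt : (0:ℝ) ≤ Real.sqrt (matDelta A / 2) := Real.sqrt_nonneg _
    nlinarith [hbox, mul_le_mul_of_nonneg_left hmnκ hrt, hrt]

end MatCapAux

open MatCapAux in
/-- Capacity lower bound for rectangular nonnegative matrices:
`cap(A) ≥ s - mn √(Δ(A)/2)`. -/
theorem matCap_ge_rect {m n : ℕ} (hm : 0 < m) (hn : 0 < n)
    (A : Matrix (Fin m) (Fin n) ℝ) (hA : ∀ i j, 0 ≤ A i j) :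
    matSize A - (m : ℝ) * (n : ℝ) * Real.sqrt (matDelta A / 2) ≤ matCap A := by
  classical
  have hm' : (0:ℝ) < m := Nat.cast_pos.2 hm
  have hn' : (0:ℝ) < n := Nat.cast_pos.2 hn
  rw [matCap]
  apply le_csInf
  · exact ⟨_, ⟨(fun _ => 1 : Fin n → ℝ), fun _ => one_pos, rfl⟩⟩
  rintro c ⟨x, hx, rfl⟩
  simp only [Fintype.card_fin]
  have hmulvec : ∀ i, A.mulVec x i = ∑ j, A i j * x j := by
    intro i
    simp [Matrix.mulVec, dotProduct]
  have hQ : (0:ℝ) < ∏ j, x j := Finset.prod_pos fun j _ => hx j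
  have hP0 : (0:ℝ) ≤ ∏ i, A.mulVec x i := by
    apply Finset.prod_nonneg
    intro i _
    rw [hmulvec i]
    exact Finset.sum_nonneg fun j _ => mul_nonneg (hA i j) (hx j).le
  have hc0 : (0:ℝ) ≤ (m:ℝ) * (∏ i, A.mulVec x i) ^ ((1:ℝ)/(m:ℝ)) / (∏ j, x j) ^ ((1:ℝ)/(n:ℝ)) := by
    apply div_nonneg (mul_nonneg hm'.le (Real.rpow_nonneg hP0 _)) (Real.rpow_nonneg hQ.le _)
  rcases le_or_gt (matSize A - (m:ℝ)*(n:ℝ)*Real.sqrt (matDelta A / 2)) 0 with ht | ht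
  · linarith
  -- main case
  obtain ⟨B, hB, hrow, hcol⟩ := exists_balanced hm hn (fun i j => A i j) (fun i j => hA i j)
    (fun S T => cut_bound hm hn A hA ht.le S T)
  set t : ℝ := matSize A - (m:ℝ)*(n:ℝ)*Real.sqrt (matDelta A / 2) with hts
  have htm : (0:ℝ) < t / m := div_pos ht hm'
  have hkey : ∀ i, (t/m) * ∏ j, (x j) ^ (B i j * m / t) ≤ ∑ j, A i j * x j := by
    intro i
    have hw1 : ∑ j, B i j * m / t = 1 := by
      rw [show (∑ j, B i j * m / t) = (∑ j, B i j) * m / t by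
        rw [← Finset.sum_div, ← Finset.sum_mul]]
      rw [hrow i]
      field_simp
    have hgm := Real.geom_mean_le_arith_mean_weighted Finset.univ
      (fun j => B i j * m / t) x
      (fun j _ => by
        have := (hB i j).1
        positivity)
      hw1 (fun j _ => (hx j).le)
    have hsum : ∑ j, (B i j * m / t) * x j = (m/t) * ∑ j, B i j * x j := by
      rw [Finset.mul_sum]
      exact Finset.sum_congr rfl fun j _ => by ring
    have h5 : ∑ j, B i j * x j ≤ ∑ j, A i j * x j :=
      Finset.sum_le_sum fun j _ => mul_le_mul_of_nonneg_right (hB i j).2 (hx j).le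
    calc (t/m) * ∏ j, x j ^ (B i j * m / t)
        ≤ (t/m) * ((m/t) * ∑ j, B i j * x j) := by
          apply mul_le_mul_of_nonneg_left _ htm.le
          rw [← hsum]
          exact hgm
      _ = ∑ j, B i j * x j := by field_simp
      _ ≤ ∑ j, A i j * x j := h5
  have hcolw : ∀ j, ∑ i, B i j * m / t = (m:ℝ)/n := by
    intro j
    rw [show (∑ i, B i j * m / t) = (∑ i, B i j) * m / t by
      rw [← Finset.sum_div, ← Finset.sum_mul]]
    rw [hcol j]
    field_simp
  have hprodeq : (t/m)^m * (∏ j, x j) ^ ((m:ℝ)/n)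
      = ∏ i : Fin m, ((t/m) * ∏ j, x j ^ (B i j * m / t)) := by
    rw [Finset.prod_mul_distrib, Finset.prod_const, Finset.card_univ, Fintype.card_fin]
    congr 1
    rw [Finset.prod_comm]
    calc (∏ j, x j) ^ ((m:ℝ)/n) = ∏ j, (x j) ^ ((m:ℝ)/n) :=
          (Real.finset_prod_rpow _ _ (fun j _ => (hx j).le) _).symm
      _ = ∏ j, ∏ i, x j ^ (B i j * m / t) := by
          refine Finset.prod_congr rfl fun j _ => ?_
          rw [← hcolw j, Real.rpow_sum_of_pos (hx j)]
  have hprod : (t/m)^m * (∏ j, x j) ^ ((m:ℝ)/n) ≤ ∏ i, A.mulVec x i := by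
    rw [hprodeq]
    apply Finset.prod_le_prod
    · intro i _
      have : (0:ℝ) ≤ ∏ j, x j ^ (B i j * m / t) :=
        Finset.prod_nonneg fun j _ => Real.rpow_nonneg (hx j).le _
      positivity
    · intro i _
      rw [hmulvec i]
      exact hkey i
  have hP1 : ((t/m)^m * (∏ j, x j) ^ ((m:ℝ)/n)) ^ ((1:ℝ)/m)
      ≤ (∏ i, A.mulVec x i) ^ ((1:ℝ)/m) :=
    Real.rpow_le_rpow (by positivity) hprod (by positivity)
  have hcomp : ((t/m)^m * (∏ j, x j) ^ ((m:ℝ)/n)) ^ ((1:ℝ)/m)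
      = (t/m) * (∏ j, x j) ^ ((1:ℝ)/n) := by
    rw [Real.mul_rpow (by positivity) (by positivity)]
    congr 1
    · rw [← Real.rpow_natCast (t/m) m, ← Real.rpow_mul htm.le]
      rw [show (m:ℝ) * ((1:ℝ)/m) = 1 by field_simp]
      exact Real.rpow_one _
    · rw [← Real.rpow_mul hQ.le]
      congr 1
      field_simp
  rw [hcomp] at hP1
  have hQr : (0:ℝ) < (∏ j, x j) ^ ((1:ℝ)/(n:ℝ)) := Real.rpow_pos_of_pos hQ _
  calc t = (m:ℝ) * ((t/m) * (∏ j, x j) ^ ((1:ℝ)/(n:ℝ))) / (∏ j, x j) ^ ((1:ℝ)/(n:ℝ)) := by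
        field_simp
    _ ≤ (m:ℝ) * (∏ i, A.mulVec x i) ^ ((1:ℝ)/(m:ℝ)) / (∏ j, x j) ^ ((1:ℝ)/(n:ℝ)) := by
        gcongr
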